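/- Let F be a finite field with q elements, κ_1, …, κ_K ≥ 0 arbitrary integers all at most κ, and for each k let V_k ⊆ F^{1×κ} be the set of vectors supported on the first κ_k coordinates. Let B ∈ F^{L×K} have full row rank L ≤ K. Then the number of distinct matrices B·M, as M ranges over matrices with k-th row in V_k, is at most max_T ∏_{k∈T} q^{κ_k}, where the maximum is over all subsets T ⊆ {1,…,K} of size L such that the stacked matrix [B; I(K∖T)] has rank K. -/

import Mathlib

open Matrix Finset Submodule

section Aux
variable {F : Type*} [Field F] {K L : ℕ}

private def Indep (B : Matrix (Fin L) (Fin K) F) (T : Finset (Fin K)) : Prop :=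
  ∀ g : Fin K → F, ∑ k ∈ T, g k • Bᵀ k = 0 → ∀ k ∈ T, g k = 0

private def SpanCond (κk : Fin K → ℕ) (B : Matrix (Fin L) (Fin K) F)
    (j : Fin K) (T : Finset (Fin K)) : Prop :=
  Bᵀ j ∈ span F (Bᵀ '' {k | k ∈ T ∧ κk j ≤ κk k})

private lemma indep_insert {B : Matrix (Fin L) (Fin K) F} {T : Finset (Fin K)} {j : Fin K}
    (hT : Indep B T) (hj : Bᵀ j ∉ span F (Bᵀ '' (T : Set (Fin K)))) :
    Indep B (insert j T) := by
  have hjT : j ∉ T := fun h => hj (subset_span ⟨j, h, rfl⟩)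
  intro g hg k hk
  rw [Finset.sum_insert hjT] at hg
  have hsum : ∑ k ∈ T, g k • Bᵀ k ∈ span F (Bᵀ '' (T : Set (Fin K))) :=
    sum_mem fun k hk => smul_mem _ _ (subset_span ⟨k, hk, rfl⟩)
  have hgj : g j = 0 := by
    by_contra h
    apply hj
    have h1 : g j • Bᵀ j = -(∑ k ∈ T, g k • Bᵀ k) := eq_neg_of_add_eq_zero_left hg
    have h2 : Bᵀ j = (g j)⁻¹ • -(∑ k ∈ T, g k • Bᵀ k) := by
      rw [← h1, smul_smul, inv_mul_cancel₀ h, one_smul]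
    rw [h2]
    exact smul_mem _ _ (neg_mem hsum)
  rw [hgj, zero_smul, zero_add] at hg
  rcases Finset.mem_insert.mp hk with rfl | hk
  · exact hgj
  · exact hT g hg k hk

private lemma greedy (κk : Fin K → ℕ) (B : Matrix (Fin L) (Fin K) F) :
    ∀ (n : ℕ) (R : Finset (Fin K)), R.card = n → ∀ T0 : Finset (Fin K),
    Indep B T0 → (∀ k ∈ T0, ∀ j ∈ R, κk j ≤ κk k) →
    ∃ T : Finset (Fin K), T0 ⊆ T ∧ Indep B T ∧ ∀ j ∈ R, SpanCond κk B j T := by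
  intro n
  induction n with
  | zero =>
    intro R hR T0 hT0 _
    refine ⟨T0, subset_rfl, hT0, ?_⟩
    simp [Finset.card_eq_zero.mp hR]
  | succ n ih =>
    intro R hR T0 hT0 hdom
    have hne : R.Nonempty := Finset.card_pos.mp (by omega)
    obtain ⟨j, hjR, hjmax⟩ := R.exists_max_image κk hne
    have hR' : (R.erase j).card = n := by
      rw [Finset.card_erase_of_mem hjR, hR]; omega
    by_cases hj : Bᵀ j ∈ span F (Bᵀ '' (T0 : Set (Fin K)))
    · obtain ⟨T, hsub, hInd, hspan⟩ := ih (R.erase j) hR' T0 hT0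
        (fun k hk j' hj' => hdom k hk j' (Finset.mem_of_mem_erase hj'))
      refine ⟨T, hsub, hInd, fun j' hj' => ?_⟩
      rcases eq_or_ne j' j with heq | hne'
      · subst heq
        refine span_mono (Set.image_mono ?_) hj
        intro x hx
        exact Set.mem_setOf.mpr ⟨hsub (Finset.mem_coe.mp hx), hdom x (Finset.mem_coe.mp hx) j' hjR⟩
      · exact hspan j' (Finset.mem_erase.mpr ⟨hne', hj'⟩)
    · obtain ⟨T, hsub, hInd, hspan⟩ := ih (R.erase j) hR' (insert j T0) (indep_insert hT0 hj)
        (fun k hk j' hj' => by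
          rcases Finset.mem_insert.mp hk with rfl | hk
          · exact hjmax j' (Finset.mem_of_mem_erase hj')
          · exact hdom k hk j' (Finset.mem_of_mem_erase hj'))
      refine ⟨T, (Finset.subset_insert j T0).trans hsub, hInd, fun j' hj' => ?_⟩
      rcases eq_or_ne j' j with heq | hne'
      · subst heq
        exact subset_span ⟨j', ⟨hsub (Finset.mem_insert_self j' T0), le_refl _⟩, rfl⟩
      · exact hspan j' (Finset.mem_erase.mpr ⟨hne', hj'⟩)

end Aux

theorem stmt_10 (F : Type*) [Field F] [Fintype F] [DecidableEq F]
    (K L κ : ℕ) (hL : 1 ≤ L) (hLK : L ≤ K)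
    (κk : Fin K → ℕ) (hκ : ∀ k : Fin K, κk k ≤ κ)
    (B : Matrix (Fin L) (Fin K) F) (hrank : B.rank = L) :
    ∃ T : Finset (Fin K), T.card = L ∧
      (Matrix.of (Sum.elim (fun j : Fin L => B j)
          (fun k : {k : Fin K // k ∉ T} => fun c : Fin K => if c = k.1 then (1 : F) else 0))).rank
        = K ∧
      ((fun M : Matrix (Fin K) (Fin κ) F => B * M) ''
          {M | ∀ (k : Fin K) (i : Fin κ), κk k ≤ (i : ℕ) → M k i = 0}).ncard
        ≤ ∏ k ∈ T, (Fintype.card F) ^ κk k := by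
  obtain ⟨T, -, hInd, hspan⟩ := greedy κk B (Finset.univ.card) Finset.univ rfl ∅
      (fun g _ k hk => absurd hk (Finset.notMem_empty k))
      (fun k hk => absurd hk (Finset.notMem_empty k))
  have hsp : ∀ j : Fin K, Bᵀ j ∈ span F (Bᵀ '' {k | k ∈ T ∧ κk j ≤ κk k}) :=
    fun j => hspan j (Finset.mem_univ j)
  -- linear independence of the T-columns
  have hLI : LinearIndependent F (fun i : {x // x ∈ T} => Bᵀ i.1) := by
    rw [Fintype.linearIndependent_iff]
    intro g hg i
    have h1 : ∑ k ∈ T, (fun k => if h : k ∈ T then g ⟨k, h⟩ else 0) k • Bᵀ k = 0 := by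
      rw [← Finset.sum_coe_sort T (fun k => (if h : k ∈ T then g ⟨k, h⟩ else 0) • Bᵀ k)]
      rw [← hg]
      exact Fintype.sum_congr _ _ (fun i => by rw [dif_pos i.2])
    have h2 := hInd _ h1 i.1 i.2
    rwa [dif_pos i.2] at h2
  -- span equality
  have hspanT : span F (Set.range Bᵀ) = span F (Bᵀ '' (T : Set (Fin K))) := by
    apply le_antisymm
    · rw [span_le]
      rintro v ⟨k, rfl⟩
      exact span_mono (Set.image_mono (fun x hx => hx.1)) (hsp k)
    · exact span_mono (Set.image_subset_range _ _)
  -- cardinality of T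
  have hTcard : T.card = L := by
    have h1 : Module.finrank F (span F (Set.range fun i : {x // x ∈ T} => Bᵀ i.1)) = T.card := by
      rw [finrank_span_eq_card hLI, Fintype.card_coe]
    have h2 : (Set.range fun i : {x // x ∈ T} => Bᵀ i.1) = Bᵀ '' (T : Set (Fin K)) :=
      (Set.image_eq_range _ _).symm
    rw [← h1, h2, ← hspanT]; exact (Matrix.rank_eq_finrank_span_cols B).symm.trans hrank
  -- injectivity of a ↦ a ᵥ* B
  have hBinj : ∀ a : Fin L → F, Bᵀ.mulVec a = 0 → a = 0 := by
    have hr : Bᵀ.rank = L := by rw [Matrix.rank_transpose, hrank]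
    have hrn := LinearMap.finrank_range_add_finrank_ker (Bᵀ.mulVecLin)
    rw [show Module.finrank F ↥(LinearMap.range Bᵀ.mulVecLin) = Bᵀ.rank from rfl, hr,
      Module.finrank_pi] at hrn
    have hker : LinearMap.ker (Bᵀ.mulVecLin) = ⊥ := by
      rw [← finrank_eq_zero (S := LinearMap.ker Bᵀ.mulVecLin)]
      simp only [Fintype.card_fin] at hrn
      omega
    intro a ha
    have hmem : a ∈ LinearMap.ker (Bᵀ.mulVecLin) := by
      rw [LinearMap.mem_ker, Matrix.mulVecLin_apply]; exact ha
    rw [hker] at hmem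
    simpa using hmem
  refine ⟨T, hTcard, ?_, ?_⟩
  ·
    set A := Matrix.of (Sum.elim (fun j : Fin L => B j)
        (fun k : {k : Fin K // k ∉ T} => fun c : Fin K => if c = k.1 then (1 : F) else 0)) with hA
    have hspT : ∀ j : Fin K, Bᵀ j ∈ span F (Bᵀ '' (T : Set (Fin K))) := by
      intro j
      exact span_mono (Set.image_mono (fun x hx => hx.1)) (hsp j)
    have hALI : LinearIndependent F (fun r : Fin L ⊕ {k : Fin K // k ∉ T} => A r) := by
      rw [Fintype.linearIndependent_iff]
      intro g hg
      have hsum : ∀ c : Fin K, (∑ i : Fin L, g (Sum.inl i) * B i c)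
          + (∑ k : {k : Fin K // k ∉ T}, g (Sum.inr k) * (if c = k.1 then 1 else 0)) = 0 := by
        intro c
        have h := congrFun hg c
        simpa [A, Fintype.sum_sum_type, Finset.sum_apply, mul_comm] using h
      have ha0 : ∀ c ∈ T, ∑ i : Fin L, g (Sum.inl i) * B i c = 0 := by
        intro c hc
        have h := hsum c
        have hz : ∑ k : {k : Fin K // k ∉ T}, g (Sum.inr k) * (if c = k.1 then 1 else 0) = 0 := by
          apply Finset.sum_eq_zero
          intro k _
          rw [if_neg (fun h' : c = k.1 => k.2 (h' ▸ hc)), mul_zero]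
        rw [hz, add_zero] at h
        exact h
      have hall : ∀ c : Fin K, ∑ i : Fin L, g (Sum.inl i) * B i c = 0 := by
        intro c
        have key : ∀ v ∈ span F (Bᵀ '' (T : Set (Fin K))),
            ∑ i : Fin L, g (Sum.inl i) * v i = 0 := by
          intro v hv
          induction hv using Submodule.span_induction with
          | mem x hx =>
            obtain ⟨k, hk, rfl⟩ := hx
            exact ha0 k (Finset.mem_coe.mp hk)
          | zero => simp
          | add x y hx hy ihx ihy => simp [Pi.add_apply, mul_add, Finset.sum_add_distrib, ihx, ihy]
          | smul t x hx ihx =>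
            simp only [Pi.smul_apply, smul_eq_mul, mul_left_comm, ← Finset.mul_sum, ihx, mul_zero]
        exact key _ (hspT c)
      have ha : ∀ i, g (Sum.inl i) = 0 := by
        have h0 : Bᵀ.mulVec (fun i => g (Sum.inl i)) = 0 := by
          funext c
          have := hall c
          simpa [Matrix.mulVec, dotProduct, mul_comm] using this
        intro i
        exact congrFun (hBinj _ h0) i
      have hb : ∀ k : {k : Fin K // k ∉ T}, g (Sum.inr k) = 0 := by
        intro k
        have h := hsum k.1
        rw [Finset.sum_eq_zero (fun i _ => by rw [ha i, zero_mul])] at h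
        rw [Finset.sum_eq_single_of_mem k (Finset.mem_univ k)
          (fun k' _ hne => by rw [if_neg (fun h' => hne (Subtype.ext h'.symm)), mul_zero])] at h
        simpa using h
      intro r
      cases r with
      | inl i => exact ha i
      | inr k => exact hb k
    have hcardrow : Fintype.card (Fin L ⊕ {k : Fin K // k ∉ T}) = K := by
      have h1 : Fintype.card {k : Fin K // k ∉ T} = K - L := by
        rw [Fintype.card_subtype_compl]
        simp [hTcard]
      rw [Fintype.card_sum, Fintype.card_fin, h1]
      omega
    rw [← Matrix.rank_transpose, Matrix.rank_eq_finrank_span_cols]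
    show Module.finrank F (span F (Set.range fun r => A r)) = K
    rw [finrank_span_eq_card hALI, hcardrow]
  ·
    -- coefficient extraction
    have hcoef : ∀ j : Fin K, ∃ c : Fin K → F,
        (∀ k, c k ≠ 0 → k ∈ T ∧ κk j ≤ κk k) ∧ Bᵀ j = ∑ k ∈ T, c k • Bᵀ k := by
      intro j
      have hj := hsp j
      set T' : Finset (Fin K) := T.filter (fun k => κk j ≤ κk k) with hT'
      have himg : Bᵀ '' {k | k ∈ T ∧ κk j ≤ κk k}
          = Set.range (fun k : {x // x ∈ T'} => Bᵀ k.1) := by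
        ext v
        simp only [Set.mem_image, Set.mem_range, Set.mem_setOf_eq, Subtype.exists, hT',
          Finset.mem_filter]
        constructor
        · rintro ⟨k, hk, rfl⟩
          exact ⟨k, hk, rfl⟩
        · rintro ⟨k, hk, rfl⟩
          exact ⟨k, hk, rfl⟩
      rw [himg, mem_span_range_iff_exists_fun] at hj
      obtain ⟨c, hc⟩ := hj
      refine ⟨fun k => if h : k ∈ T' then c ⟨k, h⟩ else 0, ?_, ?_⟩
      · intro k hk
        by_cases h : k ∈ T'
        · exact Finset.mem_filter.mp h
        · simp only [dif_neg h] at hk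
          exact absurd rfl hk
      · have e1 : ∑ k ∈ T, (if h : k ∈ T' then c ⟨k, h⟩ else 0) • Bᵀ k
            = ∑ k ∈ T', (if h : k ∈ T' then c ⟨k, h⟩ else 0) • Bᵀ k := by
          refine (Finset.sum_subset (Finset.filter_subset _ _) ?_).symm
          intro k _ hk'
          rw [dif_neg hk', zero_smul]
        have e2 : ∑ k ∈ T', (if h : k ∈ T' then c ⟨k, h⟩ else 0) • Bᵀ k
            = ∑ i : {x // x ∈ T'}, c i • Bᵀ i.1 := by
          rw [← Finset.sum_coe_sort T' (fun k => (if h : k ∈ T' then c ⟨k, h⟩ else 0) • Bᵀ k)]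
          exact Fintype.sum_congr _ _ (fun i => by rw [dif_pos i.2])
        rw [e1, e2, hc]
    choose c hc1 hc2 using hcoef
    -- equivalence and notation
    have e : Fin L ≃ {x // x ∈ T} := (Finset.equivFinOfCardEq hTcard).symm
    set t : Fin L → Fin K := fun j => (e j).1 with ht
    set S' : Set (Matrix (Fin L) (Fin κ) F) :=
      {N | ∀ (j : Fin L) (i : Fin κ), κk (t j) ≤ (i : ℕ) → N j i = 0} with hS'
    set C : Matrix (Fin L) (Fin L) F := Matrix.of (fun a j => B a (t j)) with hC
    -- key sum identity : for every a k, ∑ j, c k (t j) * B a (t j) = B a k  (k arbitrary)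
    have hkey : ∀ (k : Fin K) (a : Fin L), ∑ j : Fin L, c k (t j) * B a (t j) = B a k := by
      intro k a
      have h := congrFun (hc2 k) a
      have h2 : (∑ k' ∈ T, c k k' • Bᵀ k') a = ∑ k' ∈ T, c k k' * B a k' := by
        rw [Finset.sum_apply]
        exact Finset.sum_congr rfl (fun k' _ => by simp [Matrix.transpose_apply])
      rw [h2] at h
      calc ∑ j : Fin L, c k (t j) * B a (t j)
          = ∑ i : {x // x ∈ T}, c k i.1 * B a i.1 := Equiv.sum_comp e (fun i => c k i.1 * B a i.1)
        _ = ∑ k' ∈ T, c k k' * B a k' := Finset.sum_coe_sort T (fun k' => c k k' * B a k')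
        _ = B a k := h.symm
    -- subset relation
    have hsubset : ((fun M : Matrix (Fin K) (Fin κ) F => B * M) ''
          {M | ∀ (k : Fin K) (i : Fin κ), κk k ≤ (i : ℕ) → M k i = 0})
        ⊆ ((fun N : Matrix (Fin L) (Fin κ) F => C * N) '' S') := by
      rintro X ⟨M, hM, rfl⟩
      refine ⟨Matrix.of (fun j i => M (t j) i + ∑ k ∈ Tᶜ, c k (t j) * M k i), ?_, ?_⟩
      · intro j i hi
        simp only [Matrix.of_apply]
        rw [hM (t j) i hi, zero_add]
        apply Finset.sum_eq_zero
        intro k _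
        by_cases hck : c k (t j) = 0
        · rw [hck, zero_mul]
        · rw [hM k i (le_trans (hc1 k (t j) hck).2 hi), mul_zero]
      · show C * _ = B * M
        ext a i
        rw [Matrix.mul_apply, Matrix.mul_apply]
        have lhs : ∑ j : Fin L, C a j * (Matrix.of (fun j i => M (t j) i + ∑ k ∈ Tᶜ, c k (t j) * M k i)) j i
            = (∑ j : Fin L, B a (t j) * M (t j) i)
              + ∑ k ∈ Tᶜ, (∑ j : Fin L, c k (t j) * B a (t j)) * M k i := by
          simp only [Matrix.of_apply, hC, mul_add, Finset.sum_add_distrib, Finset.mul_sum]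
          congr 1
          rw [Finset.sum_comm]
          refine Finset.sum_congr rfl (fun k _ => ?_)
          rw [Finset.sum_mul]
          refine Finset.sum_congr rfl (fun j _ => by ring)
        rw [lhs]
        have h1 : ∑ j : Fin L, B a (t j) * M (t j) i = ∑ k ∈ T, B a k * M k i := by
          calc ∑ j : Fin L, B a (t j) * M (t j) i
              = ∑ x : {x // x ∈ T}, B a x.1 * M x.1 i :=
                Equiv.sum_comp e (fun x : {x // x ∈ T} => B a x.1 * M x.1 i)
            _ = ∑ k ∈ T, B a k * M k i := Finset.sum_coe_sort T (fun k => B a k * M k i)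
        have h2 : ∑ k ∈ Tᶜ, (∑ j : Fin L, c k (t j) * B a (t j)) * M k i
            = ∑ k ∈ Tᶜ, B a k * M k i :=
          Finset.sum_congr rfl (fun k _ => by rw [hkey k a])
        rw [h1, h2, Finset.sum_add_sum_compl]
    -- cardinality of S'
    have hS'card : S'.ncard ≤ ∏ k ∈ T, (Fintype.card F) ^ κk k := by
      have hle : Nat.card S' ≤ Nat.card (∀ j : Fin L, Fin (κk (t j)) → F) := by
        apply Nat.card_le_card_of_injective
          (fun N => fun j (i : Fin (κk (t j))) => N.1 j ⟨i.1, lt_of_lt_of_le i.2 (hκ (t j))⟩)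
        intro N N' h
        apply Subtype.ext
        funext j i
        by_cases hi : (i : ℕ) < κk (t j)
        · have := congrFun (congrFun h j) ⟨i.1, hi⟩
          simpa using this
        · rw [N.2 j i (not_lt.mp hi), N'.2 j i (not_lt.mp hi)]
      have hcard : Nat.card (∀ j : Fin L, Fin (κk (t j)) → F)
          = ∏ j : Fin L, (Fintype.card F) ^ κk (t j) := by
        rw [Nat.card_eq_fintype_card, Fintype.card_pi]
        exact Finset.prod_congr rfl (fun j _ => by rw [Fintype.card_fun, Fintype.card_fin])
      have hprod : ∏ j : Fin L, (Fintype.card F) ^ κk (t j) = ∏ k ∈ T, (Fintype.card F) ^ κk k := by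
        calc ∏ j : Fin L, (Fintype.card F) ^ κk (t j)
            = ∏ x : {x // x ∈ T}, (Fintype.card F) ^ κk x.1 :=
              Equiv.prod_comp e (fun x : {x // x ∈ T} => (Fintype.card F) ^ κk x.1)
          _ = ∏ k ∈ T, (Fintype.card F) ^ κk k :=
              Finset.prod_coe_sort T (fun k => (Fintype.card F) ^ κk k)
      rw [← Nat.card_coe_set_eq, ← hprod, ← hcard]
      exact hle
    calc ((fun M : Matrix (Fin K) (Fin κ) F => B * M) ''
          {M | ∀ (k : Fin K) (i : Fin κ), κk k ≤ (i : ℕ) → M k i = 0}).ncard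
        ≤ ((fun N : Matrix (Fin L) (Fin κ) F => C * N) '' S').ncard :=
          Set.ncard_le_ncard hsubset (Set.toFinite _)
      _ ≤ S'.ncard := Set.ncard_image_le (Set.toFinite _)
      _ ≤ ∏ k ∈ T, (Fintype.card F) ^ κk k := hS'card
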